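/- Suppose real numbers μ, a_1, …, a_14 are such that the 8 × 8 symmetric matrix G(μ, a_1, …, a_14) has rank at most 3, 0.6 ≤ μ ≤ 0.64759, and |a_j| < μ for all 1 ≤ j ≤ 14. Then a_12² = a_6². -/

import Mathlib

/-- Auxiliary: any `4 × 4` minor of an `8 × 8` real matrix of rank at most `3` vanishes. -/
lemma minor_det_zero {A : Matrix (Fin 8) (Fin 8) ℝ} (hA : A.rank ≤ 3)
    (f : Fin 4 → Fin 8) : (A.submatrix f f).det = 0 := by
  by_contra h
  have hu : IsUnit (A.submatrix f f) :=
    (Matrix.isUnit_iff_isUnit_det _).mpr (isUnit_iff_ne_zero.mpr h)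
  have hli : LinearIndependent ℝ (A.submatrix f f) :=
    Matrix.linearIndependent_rows_iff_isUnit.mpr hu
  have hcomp : A.submatrix f f = (LinearMap.funLeft ℝ ℝ f) ∘ (A.submatrix f id) := by
    ext i j; rfl
  have hliB : LinearIndependent ℝ (A.submatrix f id) := by
    apply LinearIndependent.of_comp (LinearMap.funLeft ℝ ℝ f)
    rw [← hcomp]; exact hli
  have hrB : (A.submatrix f id).rank = 4 := by
    exact hliB.rank_matrix.trans (by simp)
  have hle : (A.submatrix f id).rank ≤ A.rank := by
    rw [Matrix.rank_eq_finrank_span_row, Matrix.rank_eq_finrank_span_row]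
    apply Submodule.finrank_mono
    apply Submodule.span_mono
    rintro x ⟨i, rfl⟩
    exact ⟨f i, rfl⟩
  omega

/-- The `8 × 8` symmetric matrix `G(μ, a₁, …, a₁₄)` from the paper. -/
def packingGram (μ a1 a2 a3 a4 a5 a6 a7 a8 a9 a10 a11 a12 a13 a14 : ℝ) :
    Matrix (Fin 8) (Fin 8) ℝ :=
  !![1,  a1,  μ,  a2,  a3, -μ,  a4, -μ;
     a1, 1,  -μ,  a5, -μ,  a6, -μ,  a7;
     μ, -μ,   1,   μ,  a8, -μ,  a9, a10;
     a2, a5,  μ,   1, a11, a12,  μ,   μ;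
     a3, -μ, a8, a11,   1,   μ,  μ,  -μ;
     -μ, a6, -μ, a12,   μ,   1,  μ, a13;
     a4, -μ, a9,   μ,   μ,   μ,  1, a14;
     -μ, a7, a10,  μ,  -μ, a13, a14,  1]

/-- **Step 4.** Under the rank-3 and coherence conditions on `G`, `a₁₂² = a₆²`. -/
theorem step4
    (μ a1 a2 a3 a4 a5 a6 a7 a8 a9 a10 a11 a12 a13 a14 : ℝ)
    (hrank : (packingGram μ a1 a2 a3 a4 a5 a6 a7 a8 a9 a10 a11 a12 a13 a14).rank ≤ 3)
    (hμ1 : (0.6 : ℝ) ≤ μ) (hμ2 : μ ≤ 0.64759)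
    (h1 : |a1| < μ) (h2 : |a2| < μ) (h3 : |a3| < μ) (h4 : |a4| < μ) (h5 : |a5| < μ)
    (h6 : |a6| < μ) (h7 : |a7| < μ) (h8 : |a8| < μ) (h9 : |a9| < μ) (h10 : |a10| < μ)
    (h11 : |a11| < μ) (h12 : |a12| < μ) (h13 : |a13| < μ) (h14 : |a14| < μ) :
    a12 ^ 2 = a6 ^ 2 := by
  set A := packingGram μ a1 a2 a3 a4 a5 a6 a7 a8 a9 a10 a11 a12 a13 a14 with hA
  -- Minor on rows/columns {3, 4, 6, 7} (1-indexed)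
  have m1 : (A.submatrix ![2, 3, 5, 6] ![2, 3, 5, 6]).det = 0 := minor_det_zero hrank _
  -- Minor on rows/columns {2, 3, 6, 7} (1-indexed)
  have m2 : (A.submatrix ![1, 2, 5, 6] ![1, 2, 5, 6]).det = 0 := minor_det_zero hrank _
  have e1 : A.submatrix ![2, 3, 5, 6] ![2, 3, 5, 6] =
      !![1, μ, -μ, a9; μ, 1, a12, μ; -μ, a12, 1, μ; a9, μ, μ, 1] := by
    ext i j; fin_cases i <;> fin_cases j <;> rfl
  have e2 : A.submatrix ![1, 2, 5, 6] ![1, 2, 5, 6] =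
      !![1, -μ, a6, -μ; -μ, 1, -μ, a9; a6, -μ, 1, μ; -μ, a9, μ, 1] := by
    ext i j; fin_cases i <;> fin_cases j <;> rfl
  rw [e1] at m1
  rw [e2] at m2
  have d1 : (1 - a12 ^ 2) * (1 - a9 ^ 2) - 4 * μ ^ 2 * (1 - μ ^ 2) = 0 := by
    rw [← m1]
    simp [Matrix.det_succ_row_zero, Fin.sum_univ_succ]
    simp [Fin.succAbove, Fin.lt_def]
    ring
  have d2 : (1 - a6 ^ 2) * (1 - a9 ^ 2) - 4 * μ ^ 2 * (1 - μ ^ 2) = 0 := by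
    rw [← m2]
    simp [Matrix.det_succ_row_zero, Fin.sum_univ_succ]
    simp [Fin.succAbove, Fin.lt_def]
    ring
  have h9' : a9 ^ 2 < 1 := by nlinarith [abs_lt.mp h9, sq_abs a9]
  nlinarith [d1, d2, h9']
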